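/- The probability that a uniformly random k×k symmetric matrix over F_2 has rank k equals ∏_{j=1}^{⌊(k+1)/2⌋} (1 - 2^{-(2j-1)}). -/

import Mathlib

open Classical Finset
set_option linter.unusedSectionVars false

namespace SymCnt

open Matrix

abbrev F2 := ZMod 2

variable {β γ : Type*} [Fintype β] [DecidableEq β] [Fintype γ] [DecidableEq γ]

/-- number of symmetric invertible matrices -/
noncomputable def cnt (β : Type*) [Fintype β] [DecidableEq β] : ℕ :=
  Nat.card {A : Matrix β β F2 // A.IsSymm ∧ IsUnit A}

/-- number of symmetric matrices -/
noncomputable def scnt (β : Type*) [Fintype β] [DecidableEq β] : ℕ :=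
  Nat.card {A : Matrix β β F2 // A.IsSymm}

/-- build a symmetric-shaped matrix from corner `a`, border `v`, block `B` -/
def mk (a : F2) (v : β → F2) (B : Matrix β β F2) :
    Matrix (β ⊕ Unit) (β ⊕ Unit) F2 :=
  Matrix.fromBlocks B (Matrix.of fun i _ => v i) (Matrix.of fun _ j => v j)
    (Matrix.of fun _ _ => a)

lemma mk_isSymm_iff (a : F2) (v : β → F2) (B : Matrix β β F2) :
    (mk a v B).IsSymm ↔ B.IsSymm := by
  rw [mk, isSymm_fromBlocks_iff]
  refine ⟨fun h => h.1, fun h => ⟨h, ?_, ?_, ?_⟩⟩ <;> ext i j <;> rfl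

lemma mk_eta {A : Matrix (β ⊕ Unit) (β ⊕ Unit) F2} (hA : A.IsSymm) :
    mk (A (Sum.inr ()) (Sum.inr ())) (fun i => A (Sum.inl i) (Sum.inr ()))
      (Matrix.of fun i j => A (Sum.inl i) (Sum.inl j)) = A := by
  ext i j
  rcases i with i | ⟨⟩ <;> rcases j with j | ⟨⟩ <;>
    simp only [mk, fromBlocks, Matrix.of_apply, Sum.elim_inl, Sum.elim_inr]
  exact hA.apply _ _

/-- master decomposition equivalence -/
noncomputable def Φ (p : Matrix (β ⊕ Unit) (β ⊕ Unit) F2 → Prop) :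
    {A : Matrix (β ⊕ Unit) (β ⊕ Unit) F2 // A.IsSymm ∧ p A} ≃
      Σ av : F2 × (β → F2), {B : Matrix β β F2 // B.IsSymm ∧ p (mk av.1 av.2 B)} where
  toFun A := ⟨(A.1 (Sum.inr ()) (Sum.inr ()), fun i => A.1 (Sum.inl i) (Sum.inr ())),
    ⟨Matrix.of fun i j => A.1 (Sum.inl i) (Sum.inl j),
      by
        constructor
        · ext i j; exact A.2.1.apply _ _
        · rw [mk_eta A.2.1]; exact A.2.2⟩⟩
  invFun x := ⟨mk x.1.1 x.1.2 x.2.1, ⟨(mk_isSymm_iff _ _ _).2 x.2.2.1, x.2.2.2⟩⟩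
  left_inv A := Subtype.ext (mk_eta A.2.1)
  right_inv x := rfl

lemma nat_card_sigma {ι : Type*} [Fintype ι] (f : ι → Type*) [∀ i, Finite (f i)] :
    Nat.card (Σ i, f i) = ∑ i, Nat.card (f i) := by
  have : ∀ i, Fintype (f i) := fun i => Fintype.ofFinite _
  simp [Nat.card_eq_fintype_card]

lemma isSymm_reindex (e : β ≃ γ) {A : Matrix β β F2} :
    (Matrix.reindex e e A).IsSymm ↔ A.IsSymm := by
  unfold Matrix.IsSymm
  rw [transpose_reindex]
  exact (Matrix.reindex e e).injective.eq_iff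

lemma isUnit_reindex (e : β ≃ γ) {A : Matrix β β F2} :
    IsUnit (Matrix.reindex e e A) ↔ IsUnit A := by
  rw [Matrix.isUnit_iff_isUnit_det, Matrix.det_reindex_self, ← Matrix.isUnit_iff_isUnit_det]

lemma cnt_congr (e : β ≃ γ) : cnt β = cnt γ :=
  Nat.card_congr <| Equiv.subtypeEquiv (Matrix.reindex e e) fun A => by
    rw [isSymm_reindex, isUnit_reindex]

lemma scnt_congr (e : β ≃ γ) : scnt β = scnt γ :=
  Nat.card_congr <| Equiv.subtypeEquiv (Matrix.reindex e e) fun A => by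
    rw [isSymm_reindex]

end SymCnt

namespace SymCnt
open Matrix

variable {β γ : Type*} [Fintype β] [DecidableEq β] [Fintype γ] [DecidableEq γ]

noncomputable def ccnt (a : F2) (v : β → F2) : ℕ :=
  Nat.card {B : Matrix β β F2 // B.IsSymm ∧ IsUnit (mk a v B)}

lemma cnt_sum : cnt (β ⊕ Unit) = ∑ av : F2 × (β → F2), ccnt av.1 av.2 := by
  rw [cnt, Nat.card_congr (Φ IsUnit), nat_card_sigma]
  rfl

lemma scnt_sum : scnt (β ⊕ Unit) = 2 ^ (Fintype.card β + 1) * scnt β := by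
  have e1 : {A : Matrix (β ⊕ Unit) (β ⊕ Unit) F2 // A.IsSymm} ≃
      {A : Matrix (β ⊕ Unit) (β ⊕ Unit) F2 // A.IsSymm ∧ (fun _ => True) A} :=
    Equiv.subtypeEquivRight (by simp)
  rw [scnt, Nat.card_congr (e1.trans (Φ (fun _ => True))), nat_card_sigma]
  have h : ∀ av : F2 × (β → F2),
      Nat.card {B : Matrix β β F2 // B.IsSymm ∧ (fun _ => True) (mk av.1 av.2 B)} = scnt β :=
    fun av => by
      rw [scnt]; exact Nat.card_congr (Equiv.subtypeEquivRight (by simp))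
  rw [Finset.sum_congr rfl (fun av _ => h av), Finset.sum_const, Finset.card_univ]
  simp only [Fintype.card_prod, Fintype.card_pi, Finset.prod_const, Finset.card_univ, ZMod.card,
    smul_eq_mul]
  ring

lemma mk_one_isUnit_iff (v : β → F2) (B : Matrix β β F2) :
    IsUnit (mk 1 v B) ↔ IsUnit (B - Matrix.of fun i j => v i * v j) := by
  have hD : (Matrix.of fun (_ _ : Unit) => (1:F2)) = (1 : Matrix Unit Unit F2) := by
    ext i j; simp [Matrix.one_apply]
  rw [mk, hD]
  haveI : Invertible (1 : Matrix Unit Unit F2) := invertibleOne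
  rw [Matrix.isUnit_fromBlocks_iff_of_invertible₂₂]
  have : (Matrix.of fun (i : β) (_ : Unit) => v i) * ⅟(1 : Matrix Unit Unit F2) *
      (Matrix.of fun (_ : Unit) (j : β) => v j) = Matrix.of fun i j => v i * v j := by
    rw [invOf_one, Matrix.mul_one]
    ext i j
    simp [Matrix.mul_apply]
  rw [this]

lemma ccnt_one (v : β → F2) : ccnt 1 v = cnt β := by
  have hM : (Matrix.of fun i j => v i * v j : Matrix β β F2).IsSymm := by
    apply Matrix.IsSymm.ext; intro i j; simp [mul_comm]
  unfold ccnt cnt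
  apply Nat.card_congr
  refine Equiv.subtypeEquiv (Equiv.subRight (Matrix.of fun i j => v i * v j)) fun B => ?_
  simp only [Equiv.subRight_apply, mk_one_isUnit_iff]
  constructor
  · rintro ⟨h1, h2⟩; exact ⟨h1.sub hM, h2⟩
  · rintro ⟨h1, h2⟩
    refine ⟨?_, h2⟩
    have := h1.add hM
    simpa using this

lemma ccnt_zero_zero : ccnt (β := β) 0 0 = 0 := by
  rw [ccnt, Nat.card_eq_zero]
  left
  constructor
  rintro ⟨B, hs, hu⟩
  rw [Matrix.isUnit_iff_isUnit_det] at hu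
  have : (mk 0 (0 : β → F2) B).det = 0 := by
    apply Matrix.det_eq_zero_of_row_eq_zero (Sum.inr ())
    rintro (j | ⟨⟩) <;> rfl
  rw [this] at hu
  simp at hu

end SymCnt

namespace SymCnt
open Matrix

variable {β γ : Type*} [Fintype β] [DecidableEq β] [Fintype γ] [DecidableEq γ]

lemma conj_mk (P : Matrix β β F2) (v : β → F2) (B : Matrix β β F2) :
    (Matrix.fromBlocks P 0 0 (1 : Matrix Unit Unit F2)) * mk 0 v B *
      (Matrix.fromBlocks P 0 0 (1 : Matrix Unit Unit F2))ᵀ =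
    mk 0 (P.mulVec v) (P * B * Pᵀ) := by
  have h1 : P * (Matrix.of fun i (_ : Unit) => v i) =
      Matrix.of fun i (_ : Unit) => (P.mulVec v) i := by
    ext i j; simp [Matrix.mul_apply, Matrix.mulVec, dotProduct]
  have h2 : (Matrix.of fun (_ : Unit) j => v j) * Pᵀ =
      Matrix.of fun (_ : Unit) j => (P.mulVec v) j := by
    ext i j; simp [Matrix.mul_apply, Matrix.mulVec, dotProduct, mul_comm]
  rw [mk, mk, Matrix.fromBlocks_transpose, Matrix.fromBlocks_multiply,
    Matrix.fromBlocks_multiply]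
  simp only [Matrix.zero_mul, Matrix.mul_zero, Matrix.one_mul, Matrix.mul_one,
    Matrix.transpose_zero, Matrix.transpose_one, add_zero, zero_add, h1, h2]

lemma isSymm_conj (P : Matrix β β F2) {B : Matrix β β F2} (hB : B.IsSymm) :
    (P * B * Pᵀ).IsSymm := by
  unfold Matrix.IsSymm
  rw [Matrix.transpose_mul, Matrix.transpose_mul, Matrix.transpose_transpose, hB.eq,
    Matrix.mul_assoc]

/-- conjugation as an equivalence of the matrix space -/
def conjEquiv (U : (Matrix β β F2)ˣ) : Matrix β β F2 ≃ Matrix β β F2 where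
  toFun B := (U : Matrix β β F2) * B * (U : Matrix β β F2)ᵀ
  invFun B := (↑U⁻¹ : Matrix β β F2) * B * (↑U⁻¹ : Matrix β β F2)ᵀ
  left_inv B := by
    have h1 : (↑U⁻¹ : Matrix β β F2) * (↑U : Matrix β β F2) = 1 := U.inv_mul
    have h2 : (↑U : Matrix β β F2)ᵀ * (↑U⁻¹ : Matrix β β F2)ᵀ = 1 := by
      rw [← Matrix.transpose_mul, U.inv_mul, Matrix.transpose_one]
    simp only [Matrix.mul_assoc, h2, Matrix.mul_one]
    rw [← Matrix.mul_assoc, h1, Matrix.one_mul]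
  right_inv B := by
    have h1 : (↑U : Matrix β β F2) * (↑U⁻¹ : Matrix β β F2) = 1 := U.mul_inv
    have h2 : (↑U⁻¹ : Matrix β β F2)ᵀ * (↑U : Matrix β β F2)ᵀ = 1 := by
      rw [← Matrix.transpose_mul, U.mul_inv, Matrix.transpose_one]
    simp only [Matrix.mul_assoc, h2, Matrix.mul_one]
    rw [← Matrix.mul_assoc, h1, Matrix.one_mul]

lemma isSymm_conjEquiv_iff (U : (Matrix β β F2)ˣ) (B : Matrix β β F2) :
    (conjEquiv U B).IsSymm ↔ B.IsSymm := by
  constructor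
  · intro h
    have := isSymm_conj (↑U⁻¹ : Matrix β β F2) h
    rwa [show ((↑U⁻¹ : Matrix β β F2) * (conjEquiv U B) * (↑U⁻¹ : Matrix β β F2)ᵀ)
      = B from (conjEquiv U).left_inv B] at this
  · exact isSymm_conj _

lemma ccnt_zero_mulVec (U : (Matrix β β F2)ˣ) (v : β → F2) :
    ccnt 0 v = ccnt 0 ((U : Matrix β β F2).mulVec v) := by
  have h1 : IsUnit (Matrix.fromBlocks (U : Matrix β β F2) 0 0 (1 : Matrix Unit Unit F2)) :=
    Matrix.isUnit_fromBlocks_zero₂₁.2 ⟨U.isUnit, isUnit_one⟩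
  have h2 : IsUnit (Matrix.fromBlocks (U : Matrix β β F2) 0 0 (1 : Matrix Unit Unit F2))ᵀ :=
    (Matrix.isUnit_transpose _).2 h1
  unfold ccnt
  apply Nat.card_congr
  refine Equiv.subtypeEquiv (conjEquiv U) fun B => ?_
  rw [isSymm_conjEquiv_iff]
  have : mk 0 ((U : Matrix β β F2).mulVec v) (conjEquiv U B) =
      (Matrix.fromBlocks (U : Matrix β β F2) 0 0 (1 : Matrix Unit Unit F2)) * mk 0 v B *
        (Matrix.fromBlocks (U : Matrix β β F2) 0 0 (1 : Matrix Unit Unit F2))ᵀ :=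
    (conj_mk _ _ _).symm
  rw [this, ← h2.unit_spec, Units.isUnit_mul_units, ← h1.unit_spec, Units.isUnit_units_mul]

end SymCnt

namespace SymCnt
open Matrix

variable {β γ : Type*} [Fintype β] [DecidableEq β] [Fintype γ] [DecidableEq γ]

lemma exists_dot (v w : β → F2) (hv : v ≠ 0) (hw : w ≠ 0) :
    ∃ z : β → F2, (∑ b, z b * v b) = 1 ∧ (∑ b, z b * w b) = 1 := by
  have h01 : ∀ x : F2, x ≠ 0 → x = 1 := by decide
  have h10 : ∀ x : F2, x ≠ 1 → x = 0 := by decide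
  obtain ⟨i, hvi⟩ := Function.ne_iff.1 hv
  obtain ⟨j, hwj⟩ := Function.ne_iff.1 hw
  have hvi : v i = 1 := h01 _ hvi
  have hwj : w j = 1 := h01 _ hwj
  have key : ∀ (a : β) (u : β → F2), (∑ b, (Pi.single a 1 : β → F2) b * u b) = u a := by
    intro a u
    simp [Pi.single_apply, ite_mul]
  by_cases hvj : v j = 1
  · exact ⟨(Pi.single j 1 : β → F2), by rw [key]; exact hvj, by rw [key]; exact hwj⟩
  · by_cases hwi : w i = 1
    · exact ⟨(Pi.single i 1 : β → F2), by rw [key]; exact hvi, by rw [key]; exact hwi⟩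
    · refine ⟨(Pi.single i 1 : β → F2) + (Pi.single j 1 : β → F2), ?_, ?_⟩ <;>
        simp only [Pi.add_apply] <;>
        simp only [add_mul, Finset.sum_add_distrib, key]
      · rw [hvi, h10 _ hvj]; rfl
      · rw [hwj, h10 _ hwi]; rfl

lemma exists_unit_mulVec {v w : β → F2} (hv : v ≠ 0) (hw : w ≠ 0) :
    ∃ U : (Matrix β β F2)ˣ, (U : Matrix β β F2).mulVec v = w := by
  obtain ⟨z, hz1, hz2⟩ := exists_dot v w hv hw
  set C : Matrix β β F2 := Matrix.of fun a b => (w a + v a) * z b with hC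
  have hzero : ∑ b, z b * (w b + v b) = 0 := by
    simp only [mul_add, Finset.sum_add_distrib, hz1, hz2]
    rfl
  have hC2 : C * C = 0 := by
    ext a c
    rw [Matrix.mul_apply]
    have h : ∀ b, C a b * C b c = ((w a + v a) * z c) * (z b * (w b + v b)) := by
      intro b; simp only [hC, Matrix.of_apply]; ring
    rw [Finset.sum_congr rfl (fun b _ => h b), ← Finset.mul_sum, hzero, mul_zero]
    rfl
  have hCC : C + C = 0 := by
    ext a b
    have h2 : (2 : F2) = 0 := rfl
    simp only [Matrix.add_apply, Matrix.zero_apply]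
    linear_combination (C a b) * h2
  have hTT : (1 + C) * (1 + C) = 1 := by
    have expand : (1 + C) * (1 + C) = 1 + (C + C) + C * C := by noncomm_ring
    rw [expand, hCC, hC2, add_zero, add_zero]
  refine ⟨⟨1 + C, 1 + C, hTT, hTT⟩, ?_⟩
  show (1 + C).mulVec v = w
  rw [Matrix.add_mulVec, Matrix.one_mulVec]
  have hCv : C.mulVec v = fun a => w a + v a := by
    funext a
    show ∑ b, C a b * v b = w a + v a
    have h : ∀ b, C a b * v b = (w a + v a) * (z b * v b) := by
      intro b; simp only [hC, Matrix.of_apply]; ring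
    rw [Finset.sum_congr rfl (fun b _ => h b), ← Finset.mul_sum, hz1, mul_one]
  rw [hCv]
  funext a
  have h2 : (2 : F2) = 0 := rfl
  show v a + (w a + v a) = w a
  linear_combination (v a) * h2

end SymCnt

namespace SymCnt
open Matrix

variable {γ : Type*} [Fintype γ] [DecidableEq γ]

/-- the vector supported on the `Unit` coordinate -/
def eu : γ ⊕ Unit → F2 := Sum.elim 0 (fun _ => 1)

lemma eu_ne_zero : (eu : γ ⊕ Unit → F2) ≠ 0 := by
  intro h
  have := congrFun h (Sum.inr ())
  simp [eu] at this

section Schur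

variable (B : Matrix (γ ⊕ Unit) (γ ⊕ Unit) F2)

private def Cb : Matrix γ γ F2 := Matrix.of fun i j => B (Sum.inl i) (Sum.inl j)
private def Nb : Matrix γ (Unit ⊕ Unit) F2 :=
  Matrix.of fun i u => Sum.elim (fun _ => B (Sum.inl i) (Sum.inr ())) (fun _ => (0:F2)) u
private def Lb : Matrix (Unit ⊕ Unit) γ F2 :=
  Matrix.of fun u j => Sum.elim (fun _ => B (Sum.inr ()) (Sum.inl j)) (fun _ => (0:F2)) u
private def Mb : Matrix (Unit ⊕ Unit) (Unit ⊕ Unit) F2 :=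
  Matrix.fromBlocks (Matrix.of fun _ _ => B (Sum.inr ()) (Sum.inr ())) (Matrix.of fun _ _ => 1)
    (Matrix.of fun _ _ => 1) (Matrix.of fun _ _ => 0)
private def Mb' : Matrix (Unit ⊕ Unit) (Unit ⊕ Unit) F2 :=
  Matrix.fromBlocks (Matrix.of fun _ _ => 0) (Matrix.of fun _ _ => 1)
    (Matrix.of fun _ _ => 1) (Matrix.of fun _ _ => B (Sum.inr ()) (Sum.inr ()))

lemma reindex_mk_eu :
    Matrix.reindex (Equiv.sumAssoc γ Unit Unit) (Equiv.sumAssoc γ Unit Unit) (mk 0 eu B) =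
      Matrix.fromBlocks (Cb B) (Nb B) (Lb B) (Mb B) := by
  ext i j
  rcases i with i | u | u <;> rcases j with j | u' | u' <;> rfl

lemma char2 (x : F2) : x + x = 0 := by
  have h2 : (2 : F2) = 0 := rfl
  linear_combination x * h2

private def MbInv : Invertible (Mb B) := by
  refine ⟨Mb' B, ?_, ?_⟩ <;>
  · ext u w
    rcases u with ⟨⟩ | ⟨⟩ <;> rcases w with ⟨⟩ | ⟨⟩ <;>
      simp [Mb, Mb', Matrix.mul_apply, Fintype.sum_sum_type, Matrix.one_apply, char2]

lemma isUnit_mk_eu_iff : IsUnit (mk 0 eu B) ↔ IsUnit (Cb B) := by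
  rw [← isUnit_reindex (Equiv.sumAssoc γ Unit Unit), reindex_mk_eu]
  letI := MbInv B
  rw [Matrix.isUnit_fromBlocks_iff_of_invertible₂₂]
  have hinv : (⅟(Mb B) : Matrix (Unit ⊕ Unit) (Unit ⊕ Unit) F2) = Mb' B := rfl
  have hNML : Nb B * Mb' B * Lb B = 0 := by
    ext i j
    simp [Nb, Mb', Lb, Matrix.mul_apply, Fintype.sum_sum_type]
  rw [hinv, hNML, sub_zero]

end Schur

lemma ccnt_zero_eu : ccnt (β := γ ⊕ Unit) 0 eu = 2 ^ (Fintype.card γ + 1) * cnt γ := by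
  unfold ccnt
  have e1 : {B : Matrix (γ ⊕ Unit) (γ ⊕ Unit) F2 // B.IsSymm ∧ IsUnit (mk 0 eu B)} ≃
      {B : Matrix (γ ⊕ Unit) (γ ⊕ Unit) F2 // B.IsSymm ∧ (fun X => IsUnit (Cb X)) B} :=
    Equiv.subtypeEquivRight fun B => by rw [isUnit_mk_eu_iff]
  rw [Nat.card_congr (e1.trans (Φ (fun X => IsUnit (Cb X)))), nat_card_sigma]
  have h : ∀ av : F2 × (γ → F2),
      Nat.card {D : Matrix γ γ F2 // D.IsSymm ∧ (fun X => IsUnit (Cb X)) (mk av.1 av.2 D)}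
        = cnt γ := fun av => by
    rw [cnt]
    apply Nat.card_congr
    apply Equiv.subtypeEquivRight
    intro D
    show D.IsSymm ∧ IsUnit (Cb (mk av.1 av.2 D)) ↔ _
    have : Cb (mk av.1 av.2 D) = D := rfl
    rw [this]
  rw [Finset.sum_congr rfl (fun av _ => h av), Finset.sum_const, Finset.card_univ]
  simp only [Fintype.card_prod, Fintype.card_pi, Finset.prod_const, Finset.card_univ, ZMod.card,
    smul_eq_mul]
  ring

end SymCnt

namespace SymCnt
open Matrix

noncomputable def f (n : ℕ) : ℕ := cnt (Fin n)
noncomputable def s (n : ℕ) : ℕ := scnt (Fin n)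

lemma matrix_unique : ∀ A : Matrix (Fin 0) (Fin 0) F2, A = 1 := by
  intro A; ext i j; exact i.elim0

lemma f_zero : f 0 = 1 := by
  rw [f, cnt]
  rw [Nat.card_eq_one_iff_unique]
  constructor
  · constructor
    rintro ⟨A, _⟩ ⟨B, _⟩
    simp [Subtype.ext_iff, matrix_unique A, matrix_unique B]
  · exact ⟨⟨1, Matrix.isSymm_one, isUnit_one⟩⟩

lemma s_zero : s 0 = 1 := by
  rw [s, scnt]
  rw [Nat.card_eq_one_iff_unique]
  constructor
  · constructor
    rintro ⟨A, _⟩ ⟨B, _⟩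
    simp [Subtype.ext_iff, matrix_unique A, matrix_unique B]
  · exact ⟨⟨1, Matrix.isSymm_one⟩⟩

lemma sum_F2 (g : F2 → ℕ) : ∑ x, g x = g 0 + g 1 := by
  have h : (Finset.univ : Finset F2) = {0, 1} := by decide
  rw [h, Finset.sum_insert (by decide), Finset.sum_singleton]

lemma s_succ (n : ℕ) : s (n + 1) = 2 ^ (n + 1) * s n := by
  have e : Fin (n + 1) ≃ (Fin n ⊕ Unit) := Fintype.equivOfCardEq (by simp)
  rw [s, scnt_congr e, scnt_sum, Fintype.card_fin, s]

lemma f_one : f 1 = 1 := by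
  have e : Fin 1 ≃ (Fin 0 ⊕ Unit) := Fintype.equivOfCardEq (by simp)
  rw [f, cnt_congr e, cnt_sum, Fintype.sum_prod_type, sum_F2]
  have hv : ∀ v : Fin 0 → F2, v = 0 := fun v => Subsingleton.elim _ _
  have h1 : ∀ v : Fin 0 → F2, ccnt 0 v = 0 := fun v => by rw [hv v]; exact ccnt_zero_zero
  have h2 : ∀ v : Fin 0 → F2, ccnt 1 v = cnt (Fin 0) := fun v => ccnt_one v
  rw [Finset.sum_congr rfl (fun v _ => h1 v), Finset.sum_congr rfl (fun v _ => h2 v)]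
  have h0 : cnt (Fin 0) = 1 := f_zero
  simp [h0]

lemma f_rec (m : ℕ) :
    f (m + 2) = 2 ^ (m + 1) * f (m + 1) + (2 ^ (m + 1) - 1) * (2 ^ (m + 1) * f m) := by
  have e : Fin (m + 2) ≃ ((Fin m ⊕ Unit) ⊕ Unit) := Fintype.equivOfCardEq (by simp)
  rw [f, cnt_congr e, cnt_sum, Fintype.sum_prod_type, sum_F2]
  -- the a = 1 part
  have h1 : ∀ v : Fin m ⊕ Unit → F2, ccnt 1 v = f (m + 1) := fun v => by
    rw [ccnt_one, f]
    exact cnt_congr (Fintype.equivOfCardEq (by simp))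
  -- the a = 0 part
  have h0 : ∀ v : Fin m ⊕ Unit → F2, v ≠ 0 → ccnt 0 v = 2 ^ (m + 1) * f m := by
    intro v hv
    obtain ⟨U, hU⟩ := exists_unit_mulVec hv (eu_ne_zero (γ := Fin m))
    rw [ccnt_zero_mulVec U v, hU, ccnt_zero_eu, Fintype.card_fin, f]
  rw [Finset.sum_congr rfl (fun v _ => h1 v), Finset.sum_const, Finset.card_univ]
  rw [← Finset.add_sum_erase _ _ (Finset.mem_univ (0 : Fin m ⊕ Unit → F2)), ccnt_zero_zero]
  rw [Finset.sum_congr rfl (fun v hv => h0 v (Finset.ne_of_mem_erase hv)),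
    Finset.sum_const, Finset.card_erase_of_mem (Finset.mem_univ _), Finset.card_univ]
  have hcard : Fintype.card (Fin m ⊕ Unit → F2) = 2 ^ (m + 1) := by
    simp [Fintype.card_fun]
  rw [hcard]
  simp only [smul_eq_mul, zero_add]
  ring_nf

end SymCnt

namespace SymCnt

noncomputable def Pr (n : ℕ) : ℝ := ∏ j ∈ Finset.Icc 1 ((n + 1) / 2), (1 - ((2:ℝ)⁻¹) ^ (2 * j - 1))

lemma main : ∀ n, (f n : ℝ) = Pr n * (s n : ℝ) := by
  intro n
  induction n using Nat.strong_induction_on with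
  | _ n ih =>
    match n with
    | 0 =>
      rw [f_zero, s_zero, Pr]
      norm_num
    | 1 =>
      rw [f_one, s_succ, s_zero, Pr]
      norm_num
    | (m + 2) =>
      have ih1 := ih (m + 1) (by omega)
      have ih0 := ih m (by omega)
      have h1 : (1:ℕ) ≤ 2 ^ (m + 1) := Nat.one_le_two_pow
      have hfr : (f (m + 2) : ℝ) =
          2 ^ (m + 1) * (f (m + 1) : ℝ) + ((2:ℝ) ^ (m + 1) - 1) * (2 ^ (m + 1) * (f m : ℝ)) := by
        rw [f_rec]
        push_cast [h1]
        ring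
      have hs2 : (s (m + 2) : ℝ) = 2 ^ (m + 2) * (s (m + 1) : ℝ) := by
        rw [s_succ (m + 1)]; push_cast; ring
      have hs1 : (s (m + 1) : ℝ) = 2 ^ (m + 1) * (s m : ℝ) := by
        rw [s_succ m]; push_cast; ring
      have h2ne : ∀ j : ℕ, ((2:ℝ) ^ j) ≠ 0 := fun j => pow_ne_zero _ two_ne_zero
      rcases Nat.even_or_odd m with hm | hm
      · -- m = t + t
        obtain ⟨t, rfl⟩ := hm
        have hPr1 : Pr (t + t + 1) = Pr (t + t) * (1 - ((2:ℝ) ^ (2 * t + 1))⁻¹) := by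
          unfold Pr
          rw [show (t + t + 1 + 1) / 2 = t + 1 from by omega,
            show (t + t + 1) / 2 = t from by omega,
            Finset.prod_Icc_succ_top (by omega : 1 ≤ t + 1),
            show 2 * (t + 1) - 1 = 2 * t + 1 from by omega, inv_pow]
        have hPr2 : Pr (t + t + 2) = Pr (t + t + 1) := by
          unfold Pr
          rw [show (t + t + 2 + 1) / 2 = t + 1 from by omega,
            show (t + t + 1 + 1) / 2 = t + 1 from by omega]
        have hexp : t + t + 1 = 2 * t + 1 := by omega
        rw [hfr, ih1, ih0, hs2, hs1, hPr2, hPr1, hexp]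
        field_simp
        ring
      · -- m = 2t + 1
        obtain ⟨t, rfl⟩ := hm
        have hPr1 : Pr (2 * t + 1 + 1) = Pr (2 * t + 1) := by
          unfold Pr
          rw [show (2 * t + 1 + 1 + 1) / 2 = t + 1 from by omega,
            show (2 * t + 1 + 1) / 2 = t + 1 from by omega]
        have hPr2 : Pr (2 * t + 1 + 2) = Pr (2 * t + 1 + 1) * (1 - ((2:ℝ) ^ (2 * t + 3))⁻¹) := by
          unfold Pr
          rw [show (2 * t + 1 + 2 + 1) / 2 = t + 2 from by omega,
            show (2 * t + 1 + 1 + 1) / 2 = t + 1 from by omega,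
            Finset.prod_Icc_succ_top (by omega : 1 ≤ t + 2),
            show 2 * (t + 2) - 1 = 2 * t + 3 from by omega, inv_pow]
        have hexp1 : 2 * t + 1 + 1 = 2 * t + 2 := by omega
        have hexp2 : 2 * t + 1 + 2 = 2 * t + 3 := by omega
        rw [hfr, ih1, ih0, hs2, hs1, hPr2, hPr1, hexp1, hexp2]
        field_simp
        ring

end SymCnt

/-- The probability that a uniformly random symmetric k×k matrix over F_2
has full rank k equals ∏_{j=1}^{⌊(k+1)/2⌋} (1 - 2^{-(2j-1)}). -/
theorem prob_symmetric_full_rank (k : ℕ) :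
    ((Finset.univ.filter (fun A : Matrix (Fin k) (Fin k) (ZMod 2) =>
        A.IsSymm ∧ A.rank = k)).card : ℝ) =
    (∏ j ∈ Finset.Icc 1 ((k + 1) / 2), (1 - ((2:ℝ)⁻¹) ^ (2 * j - 1))) *
    ((Finset.univ.filter (fun A : Matrix (Fin k) (Fin k) (ZMod 2) =>
        A.IsSymm)).card : ℝ) := by
  classical
  have hrank : ∀ A : Matrix (Fin k) (Fin k) (ZMod 2), (A.rank = k ↔ IsUnit A) := by
    intro A
    constructor
    · intro h
      rw [← Matrix.linearIndependent_rows_iff_isUnit]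
      rw [linearIndependent_iff_card_eq_finrank_span]
      rw [Fintype.card_fin]
      show k = Set.finrank (ZMod 2) (Set.range A.row)
      rw [Set.finrank, ← Matrix.rank_eq_finrank_span_row A]
      exact h.symm
    · intro h
      rw [Matrix.rank_of_isUnit A h, Fintype.card_fin]
  have hset : Finset.univ.filter (fun A : Matrix (Fin k) (Fin k) (ZMod 2) =>
      A.IsSymm ∧ A.rank = k) = Finset.univ.filter (fun A => A.IsSymm ∧ IsUnit A) := by
    apply Finset.filter_congr
    intro A _
    rw [hrank A]
  have h1 : (Finset.univ.filter (fun A : Matrix (Fin k) (Fin k) (ZMod 2) =>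
      A.IsSymm ∧ A.rank = k)).card = SymCnt.f k := by
    rw [hset, SymCnt.f, SymCnt.cnt, Nat.card_eq_fintype_card, Fintype.card_subtype]
  have h2 : (Finset.univ.filter (fun A : Matrix (Fin k) (Fin k) (ZMod 2) =>
      A.IsSymm)).card = SymCnt.s k := by
    rw [SymCnt.s, SymCnt.scnt, Nat.card_eq_fintype_card, Fintype.card_subtype]
  rw [h1, h2, SymCnt.main k, SymCnt.Pr]
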